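/- Let m be a Matoušek-type USO of the n-cube with dimension influence graph G, and fix a dimension i. Flipping the direction of every edge of the lower i-facet (all edges between vertices not containing i) yields an orientation m' which is a Matoušek-type USO if and only if the graph G' obtained from G by toggling the presence of edge (i,j) for every j ≠ i is acyclic apart from loops; and in that case the dimension influence graph of m' is G'. -/

import Mathlib

open scoped symmDiff

/-- An orientation of the `n`-cube. -/
def IsOrientation (n : ℕ) (o : Finset (Fin n) → Finset (Fin n)) : Prop :=
  ∀ (v : Finset (Fin n)) (d : Fin n), d ∈ o v ↔ d ∉ o (v ∆ {d})

/-- The Szábo-Welzl unique sink condition. -/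
def IsUSO (n : ℕ) (o : Finset (Fin n) → Finset (Fin n)) : Prop :=
  ∀ v w : Finset (Fin n), v ≠ w → ((v ∆ w) ∩ (o v ∆ o w)).Nonempty

/-- The graph `E` has no directed cycle apart from loops. -/
def NoNonloopCycle (n : ℕ) (E : Fin n → Fin n → Prop) : Prop :=
  ∀ d : Fin n, ¬ Relation.TransGen (fun a b => E a b ∧ a ≠ b) d d

private lemma mem_symmDiff_xor {n : ℕ} {s t : Finset (Fin n)} {a : Fin n} :
    a ∈ s ∆ t ↔ Xor' (a ∈ s) (a ∈ t) := by
  simp [Finset.mem_symmDiff, Xor', Xor]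

open Classical in
private lemma parity_lemma {n : ℕ} (o : Finset (Fin n) → Finset (Fin n))
    (H : Fin n → Fin n → Prop)
    (h : ∀ (d d' : Fin n) (v : Finset (Fin n)),
      (Xor' (d' ∈ o v) (d' ∈ o (v ∆ {d})) ↔ H d d')) :
    ∀ (v w : Finset (Fin n)) (d' : Fin n),
      (Xor' (d' ∈ o v) (d' ∈ o w) ↔ Odd ((v ∆ w).filter (fun d => H d d')).card) := by
  suffices hk : ∀ (k : ℕ) (v w : Finset (Fin n)) (d' : Fin n), (v ∆ w).card = k →
      (Xor' (d' ∈ o v) (d' ∈ o w) ↔ Odd ((v ∆ w).filter (fun d => H d d')).card) from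
    fun v w d' => hk _ v w d' rfl
  intro k
  induction k using Nat.strong_induction_on with
  | _ k ih =>
    intro v w d' hcard
    rcases Nat.eq_zero_or_pos k with hk0 | hkpos
    · subst hk0
      have he : v ∆ w = ∅ := Finset.card_eq_zero.mp hcard
      have hvw : v = w := by
        rw [← symmDiff_eq_bot, he, Finset.bot_eq_empty]
      subst hvw
      simp [he, Xor']
    · have hne : (v ∆ w).Nonempty := Finset.card_pos.mp (hcard ▸ hkpos)
      obtain ⟨d, hd⟩ := hne
      set w' := w ∆ {d} with hw'
      have hww : w' ∆ {d} = w := by rw [hw', symmDiff_symmDiff_cancel_right]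
      have hvw' : v ∆ w' = (v ∆ w).erase d := by
        rw [hw', ← symmDiff_assoc]
        ext a
        by_cases had : a = d
        · subst had
          simp [Finset.mem_symmDiff, hd]
        · simp only [Finset.mem_symmDiff, Finset.mem_erase, Finset.mem_singleton, had]
          tauto
      have hcard' : (v ∆ w').card = k - 1 := by
        rw [hvw', Finset.card_erase_of_mem hd, hcard]
      have ihuse := ih (k - 1) (by omega) v w' d' hcard'
      have hedge : Xor' (d' ∈ o w') (d' ∈ o w) ↔ H d d' := by
        have := h d d' w'
        rwa [hww] at this
      rw [hvw'] at ihuse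
      have hins : v ∆ w = insert d ((v ∆ w).erase d) := (Finset.insert_erase hd).symm
      by_cases hH : H d d'
      · have hfil : (v ∆ w).filter (fun d => H d d') =
            insert d (((v ∆ w).erase d).filter (fun d => H d d')) := by
          conv_lhs => rw [hins]
          rw [Finset.filter_insert, if_pos hH]
        have hdni : d ∉ ((v ∆ w).erase d).filter (fun d => H d d') := by
          simp [Finset.mem_erase]
        rw [hfil, Finset.card_insert_of_notMem hdni, Nat.odd_add_one]
        simp only [Xor', Xor] at ihuse hedge ⊢
        tauto
      · have hfil : (v ∆ w).filter (fun d => H d d') =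
            ((v ∆ w).erase d).filter (fun d => H d d') := by
          conv_lhs => rw [hins]
          rw [Finset.filter_insert, if_neg hH]
        rw [hfil]
        simp only [Xor', Xor] at ihuse hedge ⊢
        tauto

open Classical in
private lemma exists_sink {n : ℕ} (r : Fin n → Fin n → Prop)
    (htr : Transitive r) (hirr : ∀ a, ¬ r a a) :
    ∀ (D : Finset (Fin n)), D.Nonempty → ∃ x ∈ D, ∀ y ∈ D, ¬ r y x := by
  intro D
  induction D using Finset.strongInductionOn with
  | _ D ih =>
    intro hD
    obtain ⟨x, hx⟩ := hD
    by_cases hex : ∃ y ∈ D, r y x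
    · obtain ⟨y, hy, hyx⟩ := hex
      have hss : D.filter (fun z => r z x) ⊂ D :=
        Finset.filter_ssubset.mpr ⟨x, hx, hirr x⟩
      obtain ⟨x', hx', hmin⟩ := ih _ hss ⟨y, by simp [hy, hyx]⟩
      have hx'x : r x' x := (Finset.mem_filter.mp hx').2
      refine ⟨x', (Finset.filter_subset _ _) hx', fun z hz hzx' => ?_⟩
      exact hmin z (Finset.mem_filter.mpr ⟨hz, htr hzx' hx'x⟩) hzx'
    · exact ⟨x, hx, fun y hy hyx => hex ⟨y, hy, hyx⟩⟩

private lemma exists_min_subset {n : ℕ} (P : Finset (Fin n) → Prop) :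
    ∀ (D : Finset (Fin n)), P D → ∃ D' ⊆ D, P D' ∧ ∀ E ⊆ D', P E → E = D' := by
  intro D
  induction D using Finset.strongInductionOn with
  | _ D ih =>
    intro hP
    by_cases hex : ∃ E ⊂ D, P E
    · obtain ⟨E, hE, hPE⟩ := hex
      obtain ⟨D', h1, h2, h3⟩ := ih E hE hPE
      exact ⟨D', h1.trans hE.subset, h2, h3⟩
    · refine ⟨D, le_refl _, hP, fun E hE hPE => ?_⟩
      by_contra hne
      exact hex ⟨E, lt_of_le_of_ne hE hne, hPE⟩

open Classical in
private lemma oddCond_of_acyclic {n : ℕ} (H : Fin n → Fin n → Prop)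
    (hloops : ∀ d, H d d) (hacyc : NoNonloopCycle n H) (D : Finset (Fin n))
    (hD : D.Nonempty) : ∃ d' ∈ D, Odd ((D.filter (fun d => H d d')).card) := by
  obtain ⟨x, hx, hmin⟩ := exists_sink (Relation.TransGen fun a b => H a b ∧ a ≠ b)
      (fun a b c hab hbc => hab.trans hbc) hacyc D hD
  refine ⟨x, hx, ?_⟩
  have hfil : D.filter (fun d => H d x) = {x} := by
    ext a
    simp only [Finset.mem_filter, Finset.mem_singleton]
    constructor
    · rintro ⟨haD, haH⟩
      by_contra hne
      exact hmin a haD (Relation.TransGen.single ⟨haH, hne⟩)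
    · rintro rfl; exact ⟨hx, hloops _⟩
  rw [hfil]
  simp

open Classical in
private lemma acyclic_of_oddCond {n : ℕ} (H : Fin n → Fin n → Prop)
    (hloops : ∀ d, H d d)
    (hodd : ∀ D : Finset (Fin n), D.Nonempty →
      ∃ d' ∈ D, Odd ((D.filter (fun d => H d d')).card)) :
    NoNonloopCycle n H := by
  intro d0 hcyc
  set E : Fin n → Fin n → Prop := fun a b => H a b ∧ a ≠ b with hEdef
  set P : Finset (Fin n) → Prop :=
    fun D => D.Nonempty ∧ ∀ x ∈ D, ∃ y ∈ D, E y x with hPdef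
  have hP0 : P (Finset.univ.filter
      (fun x => Relation.ReflTransGen E d0 x ∧ Relation.TransGen E x d0)) := by
    constructor
    · exact ⟨d0, Finset.mem_filter.mpr ⟨Finset.mem_univ _, Relation.ReflTransGen.refl, hcyc⟩⟩
    · intro x hxmem
      simp only [Finset.mem_filter, Finset.mem_univ, true_and] at hxmem
      obtain ⟨hdx, hxd⟩ := hxmem
      have ht : Relation.TransGen E d0 x := by
        rcases Relation.reflTransGen_iff_eq_or_transGen.mp hdx with rfl | h
        · exact hcyc
        · exact h
      obtain ⟨y, hy1, hy2⟩ := Relation.TransGen.tail'_iff.mp ht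
      refine ⟨y, ?_, hy2⟩
      simp only [Finset.mem_filter, Finset.mem_univ, true_and]
      exact ⟨hy1, Relation.TransGen.head hy2 hxd⟩
  obtain ⟨D, -, hPD, hminD⟩ := exists_min_subset P _ hP0
  obtain ⟨hDne, hDcyc⟩ := hPD
  -- choice of in-neighbor
  have hch : ∀ x, ∃ y, x ∈ D → y ∈ D ∧ E y x := by
    intro x
    by_cases hx : x ∈ D
    · obtain ⟨y, hy1, hy2⟩ := hDcyc x hx
      exact ⟨y, fun _ => ⟨hy1, hy2⟩⟩
    · exact ⟨x, fun h => absurd h hx⟩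
  set f : Fin n → Fin n := fun x => Classical.choose (hch x) with hfdef
  have hf : ∀ x ∈ D, f x ∈ D ∧ E (f x) x := fun x hx => Classical.choose_spec (hch x) hx
  obtain ⟨x0, hx0⟩ := hDne
  set g : ℕ → Fin n := fun j => f^[j] x0 with hgdef
  have hgsucc : ∀ j, g (j + 1) = f (g j) := fun j => Function.iterate_succ_apply' f j x0
  have hgD : ∀ j, g j ∈ D := by
    intro j
    induction j with
    | zero => exact hx0
    | succ j ihj => rw [hgsucc]; exact (hf _ ihj).1
  have hgedge : ∀ j, E (g (j + 1)) (g j) := by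
    intro j; rw [hgsucc]; exact (hf _ (hgD j)).2
  -- collision
  have hcol : ∃ k, ∃ j < k, g j = g k := by
    obtain ⟨u, v, huv, heq⟩ := Finite.exists_ne_map_eq_of_infinite g
    rcases lt_or_gt_of_ne huv with h | h
    · exact ⟨v, u, h, heq⟩
    · exact ⟨u, v, h, heq.symm⟩
  set b := Nat.find hcol with hbdef
  obtain ⟨a, hab, hgab⟩ := Nat.find_spec hcol
  have hbmin : ∀ k < b, ¬ ∃ j < k, g j = g k := fun k hk => Nat.find_min hcol hk
  have hinj : ∀ u v, u < v → v < b → g u ≠ g v := by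
    intro u v huv hv heq
    exact hbmin v hv ⟨u, huv, heq⟩
  set p := b - a with hpdef
  have hppos : 0 < p := by omega
  have hb : b = a + p := by omega
  have hper0 : ∀ t, g (a + t + p) = g (a + t) := by
    intro t
    induction t with
    | zero =>
      rw [show a + 0 + p = b by omega, show a + 0 = a by omega]
      exact hgab.symm
    | succ t iht =>
      have h1 : a + (t + 1) + p = (a + t + p) + 1 := by omega
      have h2 : a + (t + 1) = (a + t) + 1 := by omega
      rw [h1, h2, hgsucc, hgsucc, iht]
  have hperiod : ∀ u, a ≤ u → g (u + p) = g u := by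
    intro u hu
    obtain ⟨t, rfl⟩ := Nat.exists_eq_add_of_le hu
    exact hper0 t
  have hred : ∀ t, g (a + t) = g (a + t % p) := by
    intro t
    induction t using Nat.strong_induction_on with
    | _ t iht =>
      by_cases ht : t < p
      · rw [Nat.mod_eq_of_lt ht]
      · push_neg at ht
        have h1 : a + t = (a + (t - p)) + p := by omega
        have h2 : (t - p) % p = t % p := by
          conv_rhs => rw [show t = (t - p) + p by omega, Nat.add_mod_right]
        rw [h1, hperiod _ (by omega), iht (t - p) (by omega), h2]
  have hcong : ∀ s t : ℕ, g (a + s) = g (a + t) → s % p = t % p := by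
    intro s t heq
    rw [hred s, hred t] at heq
    by_contra hne
    have hsp : s % p < p := Nat.mod_lt _ hppos
    have htp : t % p < p := Nat.mod_lt _ hppos
    rcases Ne.lt_or_gt hne with h | h
    · exact hinj _ _ (by omega) (by omega) heq
    · exact hinj _ _ (by omega) (by omega) heq.symm
  -- D is the image of g on [a, b)
  have hCP : P ((Finset.Ico a b).image g) := by
    constructor
    · exact ⟨g a, Finset.mem_image.mpr ⟨a, Finset.mem_Ico.mpr ⟨le_refl a, by omega⟩, rfl⟩⟩
    · intro x hx
      obtain ⟨j, hj, rfl⟩ := Finset.mem_image.mp hx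
      rw [Finset.mem_Ico] at hj
      refine ⟨g (a + (j + 1 - a) % p), ?_, ?_⟩
      · exact Finset.mem_image.mpr ⟨a + (j + 1 - a) % p,
          Finset.mem_Ico.mpr ⟨by omega, by have := Nat.mod_lt (j + 1 - a) hppos; omega⟩, rfl⟩
      · have : g (a + (j + 1 - a) % p) = g (j + 1) := by
          rw [← hred (j + 1 - a), show a + (j + 1 - a) = j + 1 by omega]
        rw [this]
        exact hgedge j
  have hCD : (Finset.Ico a b).image g = D := by
    apply hminD
    · intro z hz
      obtain ⟨j, _, rfl⟩ := Finset.mem_image.mp hz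
      exact hgD j
    · exact hCP
  -- no chords
  have hchord : ∀ x ∈ D, ∀ y ∈ D, E y x → y = f x := by
    intro x hxD y hyD hyx
    by_contra hne
    obtain ⟨j, hj, hgj⟩ := Finset.mem_image.mp (hCD ▸ hxD)
    obtain ⟨s, hs, hgs⟩ := Finset.mem_image.mp (hCD ▸ hyD)
    rw [Finset.mem_Ico] at hj hs
    have hfx : f x = g (j + 1) := by rw [hgsucc, hgj]
    set t' := if s < j then j else j + p with ht'def
    have hgt' : g t' = x := by
      rw [ht'def]
      split
      · exact hgj
      · rw [show j + p = j + p from rfl]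
        have := hperiod j hj.1
        rw [this, hgj]
    have hst' : s < t' := by
      rw [ht'def]
      split
      · assumption
      · omega
    have hsj : s ≠ j → True := fun _ => trivial
    have ht'lt : t' < s + p := by
      rw [ht'def]
      split
      · omega
      · -- need j < s; j ≤ s here, and j = s would give x = y
        rcases Nat.lt_or_ge j s with h | h
        · omega
        · have hjs : j = s := by omega
          exfalso
          apply hyx.2
          rw [← hgs, ← hgj, hjs]
    -- the smaller cyclic set
    set D' := (Finset.Icc s t').image g with hD'def
    have hD'sub : D' ⊆ D := by
      intro z hz
      obtain ⟨u, _, rfl⟩ := Finset.mem_image.mp hz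
      exact hgD u
    have hPD' : P D' := by
      constructor
      · exact ⟨g s, Finset.mem_image.mpr ⟨s, Finset.mem_Icc.mpr ⟨le_refl s, by omega⟩, rfl⟩⟩
      · intro z hz
        obtain ⟨u, hu, rfl⟩ := Finset.mem_image.mp hz
        rw [Finset.mem_Icc] at hu
        rcases Nat.lt_or_ge u t' with hu' | hu'
        · refine ⟨g (u + 1), Finset.mem_image.mpr ⟨u + 1,
            Finset.mem_Icc.mpr ⟨by omega, by omega⟩, rfl⟩, hgedge u⟩
        · have hut : u = t' := by omega
          refine ⟨g s, Finset.mem_image.mpr ⟨s, Finset.mem_Icc.mpr ⟨le_refl s, by omega⟩, rfl⟩, ?_⟩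
          rw [hut, hgt', hgs]
          exact hyx
    have hfxD' : f x ∉ D' := by
      intro hmem
      obtain ⟨t, ht, hgt⟩ := Finset.mem_image.mp hmem
      rw [Finset.mem_Icc] at ht
      rcases Nat.lt_or_ge t t' with htlt | htge
      · -- t < t', g t = f x = g (j+1); congruence
        have hc1 : (t - a) % p = (j + 1 - a) % p := by
          apply hcong
          rw [show a + (t - a) = t by omega, show a + (j + 1 - a) = j + 1 by omega]
          rw [hgt, hfx]
        have hc2 : (t' - a) % p = (j - a) % p := by
          apply hcong
          rw [show a + (t' - a) = t' by omega, show a + (j - a) = j by omega, hgt', hgj]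
        -- derive t ≡ t' + 1 [MOD p], with t' + 1 - p ≤ t < t' + 1, so t = t' + 1 - p
        have hc3 : (t - a) % p = ((t' - a) + 1) % p := by
          have : (j + 1 - a) % p = ((j - a) + 1) % p := by
            rw [show j + 1 - a = (j - a) + 1 by omega]
          rw [hc1, this, Nat.add_mod, ← hc2, ← Nat.add_mod]
        have hmodeq : (t - a) ≡ ((t' - a) + 1) [MOD p] := hc3
        have hle : t - a ≤ (t' - a) + 1 := by omega
        have hdvd : p ∣ ((t' - a) + 1) - (t - a) :=
          (Nat.modEq_iff_dvd' hle).mp hmodeq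
        have hpos : 0 < ((t' - a) + 1) - (t - a) := by omega
        have hlep : ((t' - a) + 1) - (t - a) ≤ p := by omega
        have heq : ((t' - a) + 1) - (t - a) = p := le_antisymm hlep (Nat.le_of_dvd hpos hdvd)
        -- so t = t' + 1 - p; with t ≥ s and t' < s + p this forces t = s and t' = s + p - 1
        have hts : t = s := by omega
        -- then y = g s = g t = f x, contradiction
        apply hne
        rw [← hgs, ← hts]
        exact hgt
      · have htt : t = t' := by omega
        -- f x = x, contradicting E (f x) x
        have : f x = x := by rw [← hgt, htt, hgt']
        exact (hf x hxD).2.2 this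
    have : D' = D := hminD D' hD'sub hPD'
    rw [this] at hfxD'
    exact hfxD' (hf x hxD).1
  -- every in-degree (with loops) is exactly 2: contradiction with oddness
  obtain ⟨x, hx, hxodd⟩ := hodd D ⟨x0, hx0⟩
  have hfil : D.filter (fun d => H d x) = {x, f x} := by
    ext z
    simp only [Finset.mem_filter, Finset.mem_insert, Finset.mem_singleton]
    constructor
    · rintro ⟨hzD, hzH⟩
      by_cases hzx : z = x
      · exact Or.inl hzx
      · exact Or.inr (hchord x hx z hzD ⟨hzH, hzx⟩)
    · rintro (rfl | rfl)
      · exact ⟨hx, hloops z⟩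
      · exact ⟨(hf x hx).1, (hf x hx).2.1⟩
  have hxfx : x ≠ f x := fun h => (hf x hx).2.2 (h.symm)
  rw [hfil, Finset.card_pair hxfx] at hxodd
  exact absurd hxodd (by decide)

set_option maxHeartbeats 1000000

theorem stmt16 (n : ℕ) (G : Fin n → Fin n → Prop)
    (hloops : ∀ d, G d d) (hacyc : NoNonloopCycle n G)
    (m : Finset (Fin n) → Finset (Fin n))
    (hor : IsOrientation n m) (hUSO : IsUSO n m)
    (hinf : ∀ (d d' : Fin n) (v : Finset (Fin n)),
      (Xor' (d' ∈ m v) (d' ∈ m (v ∆ {d})) ↔ G d d'))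
    (i : Fin n)
    (m' : Finset (Fin n) → Finset (Fin n))
    (hm' : ∀ v, m' v = if i ∈ v then m v else m v ∆ (Finset.univ \ {i}))
    (G' : Fin n → Fin n → Prop)
    (hG' : ∀ d d', G' d d' ↔ (if d = i ∧ d' ≠ i then ¬ G d d' else G d d')) :
    (∀ (d d' : Fin n) (v : Finset (Fin n)),
      (Xor' (d' ∈ m' v) (d' ∈ m' (v ∆ {d})) ↔ G' d d')) ∧
    (IsUSO n m' ↔ NoNonloopCycle n G') := by
  have hT : ∀ d' : Fin n, d' ∈ Finset.univ \ ({i} : Finset (Fin n)) ↔ d' ≠ i := by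
    intro d'; simp
  have hA : ∀ (d d' : Fin n) (v : Finset (Fin n)),
      (Xor' (d' ∈ m' v) (d' ∈ m' (v ∆ {d})) ↔ G' d d') := by
    intro d d' v
    have hmain := hinf d d' v
    rw [hm' v, hm' (v ∆ {d})]
    by_cases hdi : d = i
    · subst hdi
      have hivd : d ∈ v ∆ {d} ↔ ¬ (d ∈ v) := by
        simp [Finset.mem_symmDiff]
      by_cases hiv : d ∈ v
      · rw [if_pos hiv, if_neg (fun h => (hivd.mp h) hiv)]
        rw [mem_symmDiff_xor, hT]
        by_cases hd'i : d' = d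
        · rw [hG' d d', if_neg (fun h => h.2 hd'i)]
          simp only [Xor', Xor] at hmain ⊢
          tauto
        · rw [hG' d d', if_pos ⟨rfl, hd'i⟩]
          simp only [Xor', Xor] at hmain ⊢
          tauto
      · rw [if_neg hiv, if_pos (hivd.mpr hiv)]
        rw [mem_symmDiff_xor, hT]
        by_cases hd'i : d' = d
        · rw [hG' d d', if_neg (fun h => h.2 hd'i)]
          simp only [Xor', Xor] at hmain ⊢
          tauto
        · rw [hG' d d', if_pos ⟨rfl, hd'i⟩]
          simp only [Xor', Xor] at hmain ⊢
          tauto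
    · have hivd : i ∈ v ∆ {d} ↔ i ∈ v := by
        simp only [Finset.mem_symmDiff, Finset.mem_singleton]
        constructor
        · rintro (⟨h1, _⟩ | ⟨h1, _⟩)
          · exact h1
          · exact absurd h1.symm hdi
        · intro h1
          exact Or.inl ⟨h1, fun h => hdi h.symm⟩
      have hG'' : G' d d' ↔ G d d' := by
        rw [hG' d d', if_neg (fun h => hdi h.1)]
      by_cases hiv : i ∈ v
      · rw [if_pos hiv, if_pos (hivd.mpr hiv), hG'']
        exact hmain
      · rw [if_neg hiv, if_neg (fun h => hiv (hivd.mp h))]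
        rw [mem_symmDiff_xor, mem_symmDiff_xor, hT, hG'']
        simp only [Xor', Xor] at hmain ⊢
        tauto
  refine ⟨hA, ?_⟩
  have hloops' : ∀ d, G' d d := by
    intro d
    rw [hG' d d, if_neg (fun h => h.2 h.1)]
    exact hloops d
  have key := parity_lemma m' G' hA
  constructor
  · intro hU
    apply acyclic_of_oddCond G' hloops'
    intro D hD
    obtain ⟨d', hd'⟩ := hU D ∅ (by
      intro h
      exact hD.ne_empty h)
    rw [Finset.mem_inter] at hd'
    have hDe : D ∆ (∅ : Finset (Fin n)) = D := by
      rw [← Finset.bot_eq_empty, symmDiff_bot]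
    rw [hDe] at hd'
    refine ⟨d', hd'.1, ?_⟩
    have hx := mem_symmDiff_xor.mp hd'.2
    have := (key D ∅ d').mp hx
    rwa [hDe] at this
  · intro hA'
    intro v w hvw
    have hD : (v ∆ w).Nonempty := by
      rw [Finset.nonempty_iff_ne_empty]
      intro h
      apply hvw
      apply symmDiff_eq_bot.mp
      rw [Finset.bot_eq_empty]
      exact h
    obtain ⟨d', hd'1, hd'2⟩ := oddCond_of_acyclic G' hloops' hA' (v ∆ w) hD
    refine ⟨d', Finset.mem_inter.mpr ⟨hd'1, ?_⟩⟩
    exact mem_symmDiff_xor.mpr ((key v w d').mpr hd'2)
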